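/- Let $a<b$, let $h:[a,b]\to\mathbb{R}$ be three times continuously differentiable, attaining its maximum over $[a,b]$ only at the endpoint $c=b$, with $h'(b)=0$ and $h''(b)\neq 0$. Let $k$ be an odd positive integer and let $g:[a,b]\to\mathbb{R}$ be $(k+1)$-times continuously differentiable with $g(b)=g'(b)=\cdots=g^{(k-1)}(b)=0$ and $g^{(k)}(b)\neq 0$. Then, as $t\to\infty$, $\int_a^b e^{t h(x)} g(x)\,dx = e^{t h(b)}\Big( -\, t^{-1/2-k/2}\, g^{(k)}(b)\, \sqrt{\tfrac{2^{k-1}}{|h''(b)|^{k+1}}}\, \tfrac{1}{k!}\big(\tfrac{k-1}{2}\big)! + O(t^{-1-k/2})\Big)$. -/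

import Mathlib

open Real MeasureTheory Set

private lemma side_bound {a b M : ℝ} {n : ℕ} {F F' : ℝ → ℝ} (hM : 0 ≤ M)
    (hF : ∀ x ∈ Set.Icc a b, HasDerivWithinAt F (F' x) (Set.Icc a b) x)
    (hFb : F b = 0)
    (hbound : ∀ x ∈ Set.Icc a b, -(M * (b - x) ^ n) ≤ F' x) :
    ∀ x ∈ Set.Icc a b, F x ≤ M * (b - x) ^ (n + 1) := by
  intro x hx
  have hab : a ≤ b := le_trans hx.1 hx.2
  have hbmem : b ∈ Set.Icc a b := ⟨hab, le_rfl⟩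
  set P : ℝ → ℝ := fun y => M * (b - y) ^ (n + 1) - F y with hP
  have hanti : AntitoneOn P (Set.Icc a b) := by
    have hder : ∀ y ∈ Set.Icc a b,
        HasDerivWithinAt P (-(M * ((n + 1) * (b - y) ^ n)) - F' y) (Set.Icc a b) y := by
      intro y hy
      have h1 : HasDerivWithinAt (fun y : ℝ => b - y) (-1) (Set.Icc a b) y :=
        by simpa using ((hasDerivWithinAt_const y _ b).fun_sub (hasDerivWithinAt_id y _))
      have h2 : HasDerivWithinAt (fun y : ℝ => (b - y) ^ (n + 1))
          (((n : ℝ) + 1) * (b - y) ^ n * (-1)) (Set.Icc a b) y := by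
        simpa using h1.fun_pow (n + 1)
      have h3 := (h2.const_mul M).fun_sub (hF y hy)
      refine h3.congr_deriv ?_
      ring
    apply antitoneOn_of_deriv_nonpos (convex_Icc a b)
    · exact fun y hy => ((hder y hy).continuousWithinAt)
    · intro y hy
      rw [interior_Icc] at hy
      exact (((hder y ⟨hy.1.le, hy.2.le⟩).hasDerivAt
        (Icc_mem_nhds hy.1 hy.2)).differentiableAt).differentiableWithinAt
    · intro y hy
      rw [interior_Icc] at hy
      have hym : y ∈ Set.Icc a b := ⟨hy.1.le, hy.2.le⟩
      rw [((hder y hym).hasDerivAt (Icc_mem_nhds hy.1 hy.2)).deriv]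
      have h4 := hbound y hym
      have h5 : (0:ℝ) ≤ M * (b - y) ^ n := by
        have h6 : (0:ℝ) ≤ (b - y) ^ n := pow_nonneg (by linarith [hym.2]) n
        exact mul_nonneg hM h6
      nlinarith
  have := hanti hx hbmem hx.2
  simp only [hP, hFb, sub_self, pow_succ] at this ⊢
  nlinarith [this]

private lemma abs_le_of_deriv_bound {a b M : ℝ} {n : ℕ} {F F' : ℝ → ℝ} (hM : 0 ≤ M)
    (hF : ∀ x ∈ Set.Icc a b, HasDerivWithinAt F (F' x) (Set.Icc a b) x)
    (hFb : F b = 0)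
    (hbound : ∀ x ∈ Set.Icc a b, |F' x| ≤ M * (b - x) ^ n) :
    ∀ x ∈ Set.Icc a b, |F x| ≤ M * (b - x) ^ (n + 1) := by
  intro x hx
  have h1 := side_bound hM hF hFb
    (fun y hy => neg_le_of_abs_le (hbound y hy) |>.trans_eq' rfl) x hx
  have h2 := side_bound hM (fun y hy => (hF y hy).neg) (by simp [hFb])
    (fun y hy => by
      have := abs_le.1 (hbound y hy)
      simpa using this.2) x hx
  rw [abs_le]
  constructor
  · nlinarith [h2, Pi.neg_apply F x]
  · exact h1
section
variable {a b : ℝ}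

private lemma taylor_right_bound (hab : a < b) :
    ∀ (n : ℕ) (f : ℝ → ℝ), ContDiffOn ℝ (n + 1 : ℕ) f (Set.Icc a b) →
    ∃ M : ℝ, 0 ≤ M ∧ ∀ x ∈ Set.Icc a b,
      |f x - ∑ i ∈ Finset.range (n + 1),
          iteratedDerivWithin i f (Set.Icc a b) b * (x - b) ^ i / (Nat.factorial i)|
        ≤ M * (b - x) ^ (n + 1) := by
  have hud : UniqueDiffOn ℝ (Set.Icc a b) := uniqueDiffOn_Icc hab
  have hbmem : b ∈ Set.Icc a b := ⟨hab.le, le_rfl⟩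
  intro n
  induction n with
  | zero =>
    intro f hf
    have hcont : ContinuousOn (derivWithin f (Set.Icc a b)) (Set.Icc a b) :=
      hf.continuousOn_derivWithin hud (by exact_mod_cast le_rfl)
    obtain ⟨C, hC⟩ := (isCompact_Icc).exists_bound_of_continuousOn hcont
    refine ⟨max C 0, le_max_right _ _, ?_⟩
    intro x hx
    have hmvt := Convex.norm_image_sub_le_of_norm_hasDerivWithin_le
      (C := max C 0) (f' := derivWithin f (Set.Icc a b))
      (fun y hy => ((hf.differentiableOn (by simp)) y hy).hasDerivWithinAt)
      (fun y hy => le_trans (hC y hy) (le_max_left _ _)) (convex_Icc a b) hbmem hx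
    simp only [zero_add, Finset.sum_range_one, iteratedDerivWithin_zero, pow_zero, mul_one,
      Nat.factorial_zero, Nat.cast_one, div_one]
    calc |f x - f b| ≤ max C 0 * ‖x - b‖ := hmvt
      _ = max C 0 * (b - x) ^ 1 := by
          rw [Real.norm_eq_abs, abs_sub_comm, abs_of_nonneg (by linarith [hx.2])]; ring
  | succ n IH =>
    intro f hf
    have hf1 : ContDiffOn ℝ (n + 1 : ℕ) (derivWithin f (Set.Icc a b)) (Set.Icc a b) := by
      apply hf.derivWithin hud
      push_cast
      exact le_rfl
    obtain ⟨M, hM0, hMb⟩ := IH _ hf1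
    refine ⟨M, hM0, ?_⟩
    set s := Set.Icc a b with hs
    set d : ℕ → ℝ := fun i => iteratedDerivWithin i f s b with hd
    set F : ℝ → ℝ := fun x =>
      f x - ∑ i ∈ Finset.range (n + 2), d i * (x - b) ^ i / (Nat.factorial i) with hF
    set F' : ℝ → ℝ := fun x =>
      derivWithin f s x
        - ∑ i ∈ Finset.range (n + 1), d (i + 1) * (x - b) ^ i / (Nat.factorial i) with hF'
    have hFb : F b = 0 := by
      simp only [hF]
      rw [Finset.sum_eq_single 0]
      · simp [hd]
      · intro i _ hne
        simp [sub_self, zero_pow hne]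
      · simp
    have hder : ∀ x ∈ s, HasDerivWithinAt F (F' x) s x := by
      intro x hx
      have h1 : HasDerivWithinAt f (derivWithin f s x) s x :=
        ((hf.differentiableOn (by simp)) x hx).hasDerivWithinAt
      have h2 : HasDerivAt (fun y => ∑ i ∈ Finset.range (n + 2),
          d i * (y - b) ^ i / (Nat.factorial i))
          (∑ i ∈ Finset.range (n + 2),
            d i * ((i : ℝ) * (x - b) ^ (i - 1)) / (Nat.factorial i)) x := by
        apply HasDerivAt.fun_sum
        intro i _
        have h3 : HasDerivAt (fun y : ℝ => (y - b) ^ i) ((i : ℝ) * (x - b) ^ (i - 1) * 1) x :=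
          ((hasDerivAt_id x).sub_const b).pow i
        have h4 := (h3.const_mul (d i)).div_const (Nat.factorial i)
        refine h4.congr_deriv ?_
        ring
      have h5 : (∑ i ∈ Finset.range (n + 2),
            d i * ((i : ℝ) * (x - b) ^ (i - 1)) / (Nat.factorial i))
          = ∑ i ∈ Finset.range (n + 1), d (i + 1) * (x - b) ^ i / (Nat.factorial i) := by
        rw [Finset.sum_range_succ']
        simp only [Nat.cast_zero, zero_mul, mul_zero, zero_div, add_zero]
        apply Finset.sum_congr rfl
        intro i _
        have hfne : (Nat.factorial i : ℝ) ≠ 0 := by positivity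
        rw [Nat.add_sub_cancel, Nat.factorial_succ]
        push_cast
        field_simp
      have h6 := h1.sub (h2.hasDerivWithinAt)
      rw [h5] at h6
      exact h6
    have h7 : ∀ x ∈ s, |F' x| ≤ M * (b - x) ^ (n + 1) := by
      intro x hx
      have h8 := hMb x hx
      have h9 : ∑ i ∈ Finset.range (n + 1),
          iteratedDerivWithin i (derivWithin f s) s b * (x - b) ^ i / (Nat.factorial i)
          = ∑ i ∈ Finset.range (n + 1), d (i + 1) * (x - b) ^ i / (Nat.factorial i) := by
        apply Finset.sum_congr rfl
        intro i _
        show iteratedDerivWithin i (derivWithin f s) s b * (x - b) ^ i / (Nat.factorial i)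
          = iteratedDerivWithin (i + 1) f s b * (x - b) ^ i / (Nat.factorial i)
        rw [iteratedDerivWithin_succ']
      rw [h9] at h8
      exact h8
    exact abs_le_of_deriv_bound hM0 hder hFb h7

end

private lemma gauss_integrableOn (m : ℕ) {c : ℝ} (hc : 0 < c) :
    IntegrableOn (fun u : ℝ => u ^ m * Real.exp (-c * u ^ 2)) (Set.Ioi (0:ℝ)) := by
  have hm : (-1:ℝ) < (m:ℝ) := by
    have : (0:ℝ) ≤ (m:ℝ) := Nat.cast_nonneg m
    linarith
  have h1 := integrableOn_rpow_mul_exp_neg_mul_sq hc hm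
  apply h1.congr_fun ?_ measurableSet_Ioi
  intro x hx
  simp [Real.rpow_natCast]

private lemma gauss_moment (m : ℕ) {c : ℝ} (hc : 0 < c) :
    ∫ u in Set.Ioi (0:ℝ), u ^ m * Real.exp (-c * u ^ 2)
      = c ^ (-((m:ℝ) + 1) / 2) * (1 / 2) * Real.Gamma (((m:ℝ) + 1) / 2) := by
  have hm : (-1:ℝ) < (m:ℝ) := by
    have : (0:ℝ) ≤ (m:ℝ) := Nat.cast_nonneg m
    linarith
  have h1 := integral_rpow_mul_exp_neg_mul_rpow (p := 2) (q := (m:ℝ)) two_pos hm hc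
  rw [← h1]
  apply setIntegral_congr_fun measurableSet_Ioi
  intro x hx
  simp only [Real.rpow_natCast, Real.rpow_two]

private lemma abs_exp_sub_exp (A B : ℝ) :
    |Real.exp A - Real.exp B| ≤ |A - B| * Real.exp (max A B) := by
  wlog hBA : B ≤ A generalizing A B
  · rw [abs_sub_comm, abs_sub_comm A B, max_comm]
    exact this _ _ (le_of_not_ge hBA)
  have h1 := Real.add_one_le_exp (B - A)
  have h2 : Real.exp B = Real.exp (B - A) * Real.exp A := by
    rw [← Real.exp_add]; ring_nf
  have h3 := Real.exp_pos A
  have h4 : Real.exp B ≤ Real.exp A := Real.exp_le_exp.2 hBA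
  rw [abs_of_nonneg (by linarith), abs_of_nonneg (by linarith), max_eq_left hBA]
  nlinarith

private lemma eventually_exp_small (K s : ℝ) {α : ℝ} (hα : 0 < α) :
    ∃ T : ℝ, 1 ≤ T ∧ ∀ t > T, K * Real.exp (-(α * t)) ≤ t ^ (-s) := by
  have h1 := tendsto_rpow_mul_exp_neg_mul_atTop_nhds_zero s α hα
  have hpos : (0:ℝ) < (1 + |K|)⁻¹ := by positivity
  have h2 : ∀ᶠ t in Filter.atTop, t ^ s * Real.exp (-α * t) < (1 + |K|)⁻¹ :=
    h1.eventually (gt_mem_nhds hpos)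
  obtain ⟨T₀, hT₀⟩ := Filter.eventually_atTop.1 h2
  refine ⟨max T₀ 1, le_max_right _ _, ?_⟩
  intro t ht
  have ht1 : (1:ℝ) < t := lt_of_le_of_lt (le_max_right _ _) ht
  have ht0 : (0:ℝ) < t := by linarith
  have h3 := (hT₀ t (le_of_lt (lt_of_le_of_lt (le_max_left _ _) ht))).le
  have hts : (0:ℝ) < t ^ s := Real.rpow_pos_of_pos ht0 s
  rw [Real.rpow_neg ht0.le]
  rw [neg_mul] at h3
  have he : (0:ℝ) < Real.exp (-(α * t)) := Real.exp_pos _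
  have hK : K ≤ |K| := le_abs_self K
  have e1 : t ^ s * (t ^ s)⁻¹ = 1 := mul_inv_cancel₀ hts.ne'
  have e2 : (1 + |K|) * (1 + |K|)⁻¹ = 1 := mul_inv_cancel₀ (by positivity)
  have e3 : (0:ℝ) ≤ |K| := abs_nonneg K
  have h5 := mul_le_mul_of_nonneg_left h3 e3
  nlinarith [mul_pos hts he, inv_nonneg.2 hts.le]
private lemma laplace_arith1 {H2 Mh ε d : ℝ} (hgt : 0 < H2) (hMh0 : 0 ≤ Mh) (hε0 : 0 < ε)
    (hεH : ε * (2 * (Mh + 1)) ≤ H2) (h2 : -(Mh * ε ^ 3) ≤ d - H2 * ε ^ 2 / 2)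
    (h1 : d < 0) : False := by
  nlinarith [mul_pos hε0 hε0, mul_pos (mul_pos hε0 hε0) hε0,
    mul_le_mul_of_nonneg_right hεH (mul_pos hε0 hε0).le,
    mul_nonneg (mul_nonneg hMh0 hε0.le) (mul_pos hε0 hε0).le]

private lemma laplace_arith2 {Mh δ ω : ℝ} (hMh0 : 0 ≤ Mh) (h1 : δ * (2 * (Mh + 1)) ≤ ω)
    (hδ0 : 0 < δ) : Mh * δ ≤ ω / 2 := by nlinarith

private lemma laplace_arith3 {hx hb ω Mh δ v : ℝ} (hMh0 : 0 ≤ Mh) (hδω : Mh * δ ≤ ω / 2)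
    (hv0 : 0 ≤ v) (hvδ : v ≤ δ) (h2 : hx - hb - -(ω * v ^ 2) ≤ Mh * v ^ 3) :
    hx ≤ hb - ω / 2 * v ^ 2 := by
  nlinarith [mul_le_mul_of_nonneg_right (mul_le_mul_of_nonneg_left hvδ hMh0) (sq_nonneg v),
    mul_le_mul_of_nonneg_right hδω (sq_nonneg v)]

private lemma laplace_arith4 {t hx hb m₀ : ℝ} (ht0 : 0 < t) (h1 : hx ≤ hb - m₀) :
    t * hx ≤ t * (hb - m₀) := mul_le_mul_of_nonneg_left h1 ht0.le

private lemma laplace_arith5 {t ω δ u : ℝ} (ht0 : 0 < t) (hω : 0 < ω) (hδ0 : 0 < δ)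
    (huδ : δ < u) : -(t * (ω / 2)) * u ^ 2 ≤ -(ω * δ ^ 2 / 2 * t) := by
  have hδu : δ ^ 2 ≤ u ^ 2 := pow_le_pow_left₀ hδ0.le huδ.le 2
  have h1 : t * (ω / 2) * δ ^ 2 ≤ t * (ω / 2) * u ^ 2 :=
    mul_le_mul_of_nonneg_left hδu (by positivity)
  nlinarith
set_option maxHeartbeats 1000000 in
/-- Laplace's method, maximum at the right endpoint `b` with `h'(b) = 0`, `k` odd:
`∫ e^{th} g = e^{th(b)} (-t^{-1/2-k/2} g^(k)(b) √(2^(k-1)/|h''(b)|^(k+1)) ((k-1)/2)!/k! + O(t^{-1-k/2}))`. -/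
theorem laplace_right_endpoint_critical_odd
    (a b : ℝ) (hab : a < b)
    (h g : ℝ → ℝ) (k : ℕ) (hk : Odd k) (hkpos : 0 < k)
    (hh : ContDiffOn ℝ 3 h (Set.Icc a b))
    (hmax : ∀ x ∈ Set.Icc a b, x ≠ b → h x < h b)
    (hh1 : derivWithin h (Set.Icc a b) b = 0)
    (hh2 : iteratedDerivWithin 2 h (Set.Icc a b) b ≠ 0)
    (hg : ContDiffOn ℝ (k + 1) g (Set.Icc a b))
    (hgvanish : ∀ i < k, iteratedDerivWithin i g (Set.Icc a b) b = 0)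
    (hgk : iteratedDerivWithin k g (Set.Icc a b) b ≠ 0) :
    ∃ C > 0, ∃ T > 0, ∀ t > T,
      |(∫ x in a..b, Real.exp (t * h x) * g x) -
        Real.exp (t * h b) * (-(t ^ (-(1 : ℝ) / 2 - (k : ℝ) / 2)) *
          iteratedDerivWithin k g (Set.Icc a b) b *
          Real.sqrt ((2 : ℝ) ^ (k - 1) / |iteratedDerivWithin 2 h (Set.Icc a b) b| ^ (k + 1)) *
          ((Nat.factorial ((k - 1) / 2) : ℝ) / (Nat.factorial k : ℝ)))| ≤
        C * Real.exp (t * h b) * t ^ (-(1 : ℝ) - (k : ℝ) / 2) := by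
  obtain ⟨m, hmk⟩ := hk
  have hud : UniqueDiffOn ℝ (Set.Icc a b) := uniqueDiffOn_Icc hab
  have hbmem : b ∈ Set.Icc a b := ⟨hab.le, le_rfl⟩
  set H2 := iteratedDerivWithin 2 h (Set.Icc a b) b with hH2def
  set G := iteratedDerivWithin k g (Set.Icc a b) b with hGdef
  have hkfac : (0:ℝ) < (Nat.factorial k : ℝ) := by
    exact_mod_cast Nat.factorial_pos k
  -- Taylor expansion of h at b to order 2
  obtain ⟨Mh, hMh0, hMhb⟩ := taylor_right_bound hab 2 h (hh.of_le (by norm_cast))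
  have hTayh : ∀ x ∈ Set.Icc a b, |h x - h b - H2 * (x - b) ^ 2 / 2| ≤ Mh * (b - x) ^ 3 := by
    intro x hx
    have h1 := hMhb x hx
    have h2 : (∑ i ∈ Finset.range (2 + 1),
        iteratedDerivWithin i h (Set.Icc a b) b * (x - b) ^ i / (Nat.factorial i))
        = h b + H2 * (x - b) ^ 2 / 2 := by
      rw [Finset.sum_range_succ, Finset.sum_range_succ, Finset.sum_range_one,
        iteratedDerivWithin_one, hh1, iteratedDerivWithin_zero]
      norm_num [Nat.factorial, hH2def]
    rw [h2] at h1
    have h3 : h x - (h b + H2 * (x - b) ^ 2 / 2) = h x - h b - H2 * (x - b) ^ 2 / 2 := by ring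
    rw [h3] at h1
    exact h1
  -- Taylor expansion of g at b to order k
  obtain ⟨Mg, hMg0, hMgb⟩ := taylor_right_bound hab k g (hg.of_le (by norm_cast))
  have hTayg : ∀ x ∈ Set.Icc a b,
      |g x - G * (x - b) ^ k / (Nat.factorial k)| ≤ Mg * (b - x) ^ (k + 1) := by
    intro x hx
    have h1 := hMgb x hx
    have h2 : (∑ i ∈ Finset.range (k + 1),
        iteratedDerivWithin i g (Set.Icc a b) b * (x - b) ^ i / (Nat.factorial i))
        = G * (x - b) ^ k / (Nat.factorial k) := by
      rw [Finset.sum_range_succ, Finset.sum_eq_zero, zero_add]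
      intro i hi
      rw [hgvanish i (Finset.mem_range.1 hi)]
      simp
    rw [h2] at h1
    exact h1
  -- second derivative is negative
  have hH2neg : H2 < 0 := by
    rcases lt_or_gt_of_ne hh2 with hlt | hgt
    · exact hlt
    exfalso
    set ε := min (b - a) (H2 / (2 * (Mh + 1))) with hεdef
    have hε0 : 0 < ε := lt_min (by linarith) (by positivity)
    have hεa : ε ≤ b - a := min_le_left _ _
    have hεH : ε * (2 * (Mh + 1)) ≤ H2 := by
      have := min_le_right (b - a) (H2 / (2 * (Mh + 1)))
      rw [← hεdef] at this
      exact (le_div_iff₀ (by positivity)).1 this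
    have hxmem : b - ε ∈ Set.Icc a b := ⟨by linarith, by linarith⟩
    have h1 := hmax _ hxmem (by
      intro hc
      have := sub_eq_self.mp hc
      linarith)
    have h2 := (abs_le.1 (hTayh _ hxmem)).1
    have e1 : (b - ε - b) ^ 2 = ε ^ 2 := by ring
    have e2 : (b - (b - ε)) ^ 3 = ε ^ 3 := by ring
    rw [e1, e2] at h2
    exact laplace_arith1 hgt hMh0 hε0 hεH h2 (by linarith)
  set ω := -H2 / 2 with hωdef
  have hω : 0 < ω := by rw [hωdef]; linarith
  set δ := min (b - a) (ω / (2 * (Mh + 1))) with hδdef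
  have hδ0 : 0 < δ := lt_min (by linarith) (by positivity)
  have hδa : δ ≤ b - a := min_le_left _ _
  have hδω : Mh * δ ≤ ω / 2 := by
    have h1 : δ * (2 * (Mh + 1)) ≤ ω := by
      have := min_le_right (b - a) (ω / (2 * (Mh + 1)))
      rw [← hδdef] at this
      exact (le_div_iff₀ (by positivity)).1 this
    exact laplace_arith2 hMh0 h1 hδ0
  have hupper : ∀ x ∈ Set.Icc (b - δ) b, h x ≤ h b - ω / 2 * (b - x) ^ 2 := by
    intro x hx
    have hxs : x ∈ Set.Icc a b := ⟨by linarith [hx.1], hx.2⟩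
    have h2 := (abs_le.1 (hTayh x hxs)).2
    have hbx0 : 0 ≤ b - x := by linarith [hx.2]
    have hbxδ : b - x ≤ δ := by linarith [hx.1]
    have e1 : H2 * (x - b) ^ 2 / 2 = -(ω * (b - x) ^ 2) := by rw [hωdef]; ring
    rw [e1] at h2
    exact laplace_arith3 hMh0 hδω hbx0 hbxδ h2
  -- maximum on the bulk
  have hbne : (Set.Icc a (b - δ)).Nonempty := ⟨a, le_rfl, by linarith⟩
  have hsub : Set.Icc a (b - δ) ⊆ Set.Icc a b := Set.Icc_subset_Icc le_rfl (by linarith)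
  obtain ⟨x₀, hx₀mem, hx₀max⟩ := isCompact_Icc.exists_isMaxOn hbne (hh.continuousOn.mono hsub)
  set m₀ := h b - h x₀ with hm₀def
  have hm₀ : 0 < m₀ := by
    have h1 := hmax x₀ (hsub hx₀mem) (by
      intro hc
      have := hx₀mem.2
      rw [hc] at this
      linarith)
    rw [hm₀def]
    linarith
  have hbulk : ∀ x ∈ Set.Icc a (b - δ), h x ≤ h b - m₀ := by
    intro x hx
    have h1 : h x ≤ h x₀ := hx₀max hx
    rw [hm₀def]
    linarith
  -- bound for g
  obtain ⟨Kg0, hKg0⟩ := isCompact_Icc.exists_bound_of_continuousOn hg.continuousOn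
  set Kg := max Kg0 0 with hKgdef
  have hKg : ∀ x ∈ Set.Icc a b, |g x| ≤ Kg := fun x hx =>
    le_trans (hKg0 x hx) (le_max_left _ _)
  have hKgnn : 0 ≤ Kg := le_max_right _ _
  -- constants
  set A1 := Mg * ((ω/2) ^ (-((k:ℝ)+2)/2) * (1/2) * Real.Gamma (((k:ℝ)+2)/2)) with hA1def
  set A2 := (|G| * Mh / (Nat.factorial k)) *
      ((ω/2) ^ (-((k:ℝ)+4)/2) * (1/2) * Real.Gamma (((k:ℝ)+4)/2)) with hA2def
  set Atail := (|G| / (Nat.factorial k)) *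
      ((ω/2) ^ (-((k:ℝ)+1)/2) * (1/2) * Real.Gamma (((k:ℝ)+1)/2)) with hAtaildef
  have hΓ1 : 0 < Real.Gamma (((k:ℝ)+2)/2) := Real.Gamma_pos_of_pos (by positivity)
  have hΓ2 : 0 < Real.Gamma (((k:ℝ)+4)/2) := Real.Gamma_pos_of_pos (by positivity)
  have hΓ3 : 0 < Real.Gamma (((k:ℝ)+1)/2) := Real.Gamma_pos_of_pos (by positivity)
  have hA1nn : 0 ≤ A1 := by
    rw [hA1def]
    have : (0:ℝ) ≤ (ω/2) ^ (-((k:ℝ)+2)/2) := (Real.rpow_pos_of_pos (by positivity) _).le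
    positivity
  have hA2nn : 0 ≤ A2 := by
    rw [hA2def]
    have : (0:ℝ) ≤ (ω/2) ^ (-((k:ℝ)+4)/2) := (Real.rpow_pos_of_pos (by positivity) _).le
    positivity
  obtain ⟨T₁, hT₁1, hT₁⟩ := eventually_exp_small (Kg * (b - a)) (1 + (k:ℝ)/2) hm₀
  obtain ⟨T₂, hT₂1, hT₂⟩ := eventually_exp_small Atail (1/2)
    (show (0:ℝ) < ω * δ^2 / 2 by positivity)
  refine ⟨A1 + A2 + 2, by linarith, max T₁ T₂, by
    have : (1:ℝ) ≤ max T₁ T₂ := le_trans hT₁1 (le_max_left _ _)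
    linarith, ?_⟩
  intro t ht
  have ht1 : (1:ℝ) < t := lt_of_le_of_lt (le_trans hT₁1 (le_max_left _ _)) ht
  have ht0 : (0:ℝ) < t := by linarith
  have htT₁ : t > T₁ := lt_of_le_of_lt (le_max_left _ _) ht
  have htT₂ : t > T₂ := lt_of_le_of_lt (le_max_right _ _) ht
  set E := Real.exp (t * h b) with hEdef
  have hE0 : 0 < E := Real.exp_pos _
  set φ := fun x => Real.exp (t * h x) * g x with hφdef
  set Ψ := fun u : ℝ => u ^ k * Real.exp (-(t*ω) * u^2) with hΨdef
  set Θ := fun u : ℝ => Real.exp (t * h b - t * ω * u^2) * (G * (-u)^k / (Nat.factorial k))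
    with hΘdef
  have hφcont : ContinuousOn φ (Set.Icc a b) :=
    (Real.continuous_exp.comp_continuousOn (continuousOn_const.mul hh.continuousOn)).mul
      hg.continuousOn
  have hΘcont : Continuous Θ := by
    have c1 : Continuous fun u : ℝ => t * h b - t * ω * u^2 :=
      continuous_const.sub (continuous_const.mul (continuous_pow 2))
    have c2 : Continuous fun u : ℝ => G * (-u)^k / (Nat.factorial k : ℝ) :=
      (continuous_const.mul (continuous_neg.pow k)).div_const _
    exact (Real.continuous_exp.comp c1).mul c2
  have hint1 : IntervalIntegrable φ MeasureTheory.volume a (b - δ) := by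
    apply ContinuousOn.intervalIntegrable
    apply hφcont.mono
    rw [Set.uIcc_of_le (by linarith)]
    exact Set.Icc_subset_Icc le_rfl (by linarith)
  have hint2 : IntervalIntegrable φ MeasureTheory.volume (b - δ) b := by
    apply ContinuousOn.intervalIntegrable
    apply hφcont.mono
    rw [Set.uIcc_of_le (by linarith)]
    exact Set.Icc_subset_Icc (by linarith) le_rfl
  have hΘeq : ∀ u : ℝ, Θ u = -(E * (G / Nat.factorial k)) * Ψ u := by
    intro u
    show Real.exp (t * h b - t * ω * u^2) * (G * (-u)^k / (Nat.factorial k))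
      = -(E * (G / Nat.factorial k)) * (u ^ k * Real.exp (-(t*ω) * u^2))
    rw [Odd.neg_pow ⟨m, hmk⟩]
    rw [show t * h b - t*ω*u^2 = t * h b + (-(t*ω)*u^2) by ring, Real.exp_add, hEdef]
    ring
  have hΨint : MeasureTheory.IntegrableOn Ψ (Set.Ioi 0) MeasureTheory.volume :=
    gauss_integrableOn k (by positivity)
  have hΨnn : ∀ u ∈ Set.Ioi (0:ℝ), 0 ≤ Ψ u := by
    intro u hu
    have hu0 : (0:ℝ) < u := hu
    show 0 ≤ u ^ k * Real.exp (-(t*ω) * u^2)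
    positivity
  have hIsplit : ∫ x in a..b, φ x = (∫ x in a..(b-δ), φ x) + ∫ x in (b-δ)..b, φ x :=
    (intervalIntegral.integral_add_adjacent_intervals hint1 hint2).symm
  have hJsplit : ∫ u in Set.Ioi (0:ℝ), Ψ u
      = (∫ u in Set.Ioc 0 δ, Ψ u) + ∫ u in Set.Ioi δ, Ψ u := by
    rw [← Set.Ioc_union_Ioi_eq_Ioi hδ0.le]
    exact MeasureTheory.setIntegral_union (Set.Ioc_disjoint_Ioi le_rfl) measurableSet_Ioi
      (hΨint.mono_set Set.Ioc_subset_Ioi_self) (hΨint.mono_set (Set.Ioi_subset_Ioi hδ0.le))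
  have hmid1 : ∫ x in (b-δ)..b, Θ (b - x) = ∫ u in (0:ℝ)..δ, Θ u := by
    rw [intervalIntegral.integral_comp_sub_left Θ b]
    norm_num
  have hmid2 : ∫ u in (0:ℝ)..δ, Θ u
      = -(E * (G / Nat.factorial k)) * ∫ u in Set.Ioc 0 δ, Ψ u := by
    rw [intervalIntegral.integral_of_le hδ0.le]
    rw [MeasureTheory.setIntegral_congr_fun measurableSet_Ioc (fun u _ => hΘeq u)]
    rw [MeasureTheory.integral_const_mul]
  have hJval : ∫ u in Set.Ioi (0:ℝ), Ψ u
      = (t*ω) ^ (-((k:ℝ)+1)/2) * (1/2) * Real.Gamma (((k:ℝ)+1)/2) :=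
    gauss_moment k (by positivity)
  -- the main-term identity
  have hmain : E * (-(t ^ (-(1:ℝ)/2 - (k:ℝ)/2)) * G *
        Real.sqrt ((2:ℝ)^(k-1)/|H2|^(k+1)) *
        ((Nat.factorial ((k-1)/2) : ℝ)/(Nat.factorial k : ℝ)))
      = -(E * (G / Nat.factorial k)) * ∫ u in Set.Ioi (0:ℝ), Ψ u := by
    rw [hJval]
    have habs : (0:ℝ) < |H2| := abs_pos.2 hh2
    have hm2 : (k - 1)/2 = m := by omega
    have hsq : Real.sqrt ((2:ℝ)^(k-1)/|H2|^(k+1)) = 2^m / |H2|^(m+1) := by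
      rw [show k - 1 = 2*m by omega, show k + 1 = 2*(m+1) by omega]
      rw [show (2:ℝ)^(2*m)/|H2|^(2*(m+1)) = ((2:ℝ)^m/|H2|^(m+1))^2 by
        rw [mul_comm 2 m, mul_comm 2 (m+1), pow_mul, pow_mul]
        rw [div_pow]]
      exact Real.sqrt_sq (by positivity)
    have hgam : Real.Gamma (((k:ℝ)+1)/2) = Nat.factorial m := by
      rw [hmk]
      push_cast
      rw [show ((2*(m:ℝ)+1)+1)/2 = (m:ℝ)+1 by ring]
      exact_mod_cast Real.Gamma_nat_eq_factorial m
    have htm : t ^ (-(1:ℝ)/2 - (k:ℝ)/2) = (t ^ (m+1 : ℕ))⁻¹ := by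
      rw [hmk]
      push_cast
      rw [show -(1:ℝ)/2 - (2*(m:ℝ)+1)/2 = -((m:ℝ)+1) by ring]
      rw [Real.rpow_neg ht0.le]
      rw [show ((m:ℝ)+1) = ((m+1 : ℕ):ℝ) by push_cast; ring, Real.rpow_natCast]
    have htω : (t*ω) ^ (-((k:ℝ)+1)/2) = ((t*ω) ^ (m+1 : ℕ))⁻¹ := by
      rw [hmk]
      push_cast
      rw [show -((2*(m:ℝ)+1)+1)/2 = -((m:ℝ)+1) by ring]
      rw [Real.rpow_neg (by positivity)]
      rw [show ((m:ℝ)+1) = ((m+1 : ℕ):ℝ) by push_cast; ring, Real.rpow_natCast]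
    rw [hsq, hgam, htm, htω, hm2]
    have hωabs : ω = |H2| / 2 := by rw [abs_of_neg hH2neg, hωdef]
    rw [hωabs]
    have htp : (0:ℝ) < t ^ (m+1:ℕ) := by positivity
    rw [mul_pow]
    rw [show (|H2|/2) ^ (m+1:ℕ) = |H2|^(m+1:ℕ) / 2^(m+1:ℕ) by rw [div_pow]]
    field_simp
    ring
  -- decomposition of the difference
  have hΘint2 : IntervalIntegrable (fun x => Θ (b - x)) MeasureTheory.volume (b-δ) b :=
    (hΘcont.comp (continuous_const.sub continuous_id)).intervalIntegrable _ _
  have hdecomp : (∫ x in a..b, φ x) -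
      E * (-(t ^ (-(1:ℝ)/2 - (k:ℝ)/2)) * G *
        Real.sqrt ((2:ℝ)^(k-1)/|H2|^(k+1)) *
        ((Nat.factorial ((k-1)/2) : ℝ)/(Nat.factorial k : ℝ)))
      = (∫ x in a..(b-δ), φ x) + (∫ x in (b-δ)..b, (φ x - Θ (b - x)))
        + (E * (G/Nat.factorial k)) * ∫ u in Set.Ioi δ, Ψ u := by
    have hsub2 : ∫ x in (b-δ)..b, (φ x - Θ (b - x))
        = (∫ x in (b-δ)..b, φ x) - ∫ x in (b-δ)..b, Θ (b-x) :=
      intervalIntegral.integral_sub hint2 hΘint2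
    rw [hsub2, hmain, hJsplit, hIsplit, hmid1, hmid2]
    ring
  -- Bound 1 : bulk
  have hB1 : |∫ x in a..(b-δ), φ x| ≤ E * t ^ (-(1:ℝ) - (k:ℝ)/2) := by
    have hC : ∀ x ∈ Set.uIoc a (b-δ), ‖φ x‖ ≤ Real.exp (t * (h b - m₀)) * Kg := by
      intro x hx
      rw [Set.uIoc_of_le (by linarith)] at hx
      have hxs : x ∈ Set.Icc a (b - δ) := ⟨hx.1.le, hx.2⟩
      have h1 : h x ≤ h b - m₀ := hbulk x hxs
      have h2 : |g x| ≤ Kg := hKg x (hsub hxs)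
      show |Real.exp (t * h x) * g x| ≤ _
      rw [abs_mul, Real.abs_exp]
      exact mul_le_mul (Real.exp_le_exp.2 (laplace_arith4 ht0 h1)) h2 (abs_nonneg _)
        (Real.exp_pos _).le
    have h3 := intervalIntegral.norm_integral_le_of_norm_le_const hC
    have h4 : Real.exp (t * (h b - m₀)) * Kg * |b - δ - a|
        ≤ E * (Kg * (b - a) * Real.exp (-(m₀ * t))) := by
      rw [show t * (h b - m₀) = t * h b + (-(m₀*t)) by ring, Real.exp_add,
        abs_of_nonneg (show (0:ℝ) ≤ b - δ - a by linarith), hEdef]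
      have hba : b - δ - a ≤ b - a := by linarith
      have hnn : (0:ℝ) ≤ Real.exp (t * h b) * Real.exp (-(m₀*t)) * Kg := by positivity
      calc Real.exp (t * h b) * Real.exp (-(m₀*t)) * Kg * (b - δ - a)
          ≤ Real.exp (t * h b) * Real.exp (-(m₀*t)) * Kg * (b - a) :=
            mul_le_mul_of_nonneg_left hba hnn
        _ = Real.exp (t * h b) * (Kg * (b - a) * Real.exp (-(m₀ * t))) := by ring
    calc |∫ x in a..(b-δ), φ x| ≤ Real.exp (t * (h b - m₀)) * Kg * |b - δ - a| := h3
      _ ≤ E * (Kg * (b - a) * Real.exp (-(m₀ * t))) := h4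
      _ ≤ E * t ^ (-(1 + (k:ℝ)/2)) := by
          have := hT₁ t htT₁
          exact mul_le_mul_of_nonneg_left this hE0.le
      _ = E * t ^ (-(1:ℝ) - (k:ℝ)/2) := by
          rw [show -(1 + (k:ℝ)/2) = -(1:ℝ) - (k:ℝ)/2 by ring]
  -- Bound 2 : middle
  have hc2 : (0:ℝ) < t * (ω/2) := by positivity
  have hB2 : |∫ x in (b-δ)..b, (φ x - Θ (b - x))|
      ≤ (A1 + A2) * (E * t ^ (-(1:ℝ) - (k:ℝ)/2)) := by
    set c3 : ℝ := |G| * Mh / (Nat.factorial k) with hc3def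
    have hc3nn : 0 ≤ c3 := by positivity
    set ρ := fun u : ℝ => E * Mg * (u^(k+1) * Real.exp (-(t*(ω/2)) * u^2))
        + E * (c3 * t) * (u^(k+3) * Real.exp (-(t*(ω/2)) * u^2)) with hρdef
    have hρnn : ∀ u : ℝ, 0 ≤ ρ u := by
      intro u
      have he1 : Even (k+1) := Odd.add_one ⟨m, hmk⟩
      have he2 : Even (k+3) := by
        rcases he1 with ⟨r, hr⟩
        exact ⟨r+1, by omega⟩
      have h1 : (0:ℝ) ≤ u^(k+1) := he1.pow_nonneg u
      have h2 : (0:ℝ) ≤ u^(k+3) := he2.pow_nonneg u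
      have h3 : (0:ℝ) < Real.exp (-(t*(ω/2)) * u^2) := Real.exp_pos _
      show (0:ℝ) ≤ E * Mg * (u^(k+1) * Real.exp (-(t*(ω/2)) * u^2))
        + E * (c3 * t) * (u^(k+3) * Real.exp (-(t*(ω/2)) * u^2))
      have h4 : (0:ℝ) ≤ E * Mg := by positivity
      have h5 : (0:ℝ) ≤ E * (c3 * t) := by positivity
      exact add_nonneg (mul_nonneg h4 (mul_nonneg h1 h3.le))
        (mul_nonneg h5 (mul_nonneg h2 h3.le))
    have hptw : ∀ x ∈ Set.uIoc (b-δ) b, ‖φ x - Θ (b - x)‖ ≤ ρ (b - x) := by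
      intro x hx
      rw [Set.uIoc_of_le (by linarith)] at hx
      have hxI : x ∈ Set.Icc (b-δ) b := ⟨hx.1.le, hx.2⟩
      have hxs : x ∈ Set.Icc a b := ⟨by linarith [hxI.1], hxI.2⟩
      have hu0 : 0 ≤ b - x := by linarith [hxI.2]
      have hh_up : h x ≤ h b - ω/2 * (b-x)^2 := hupper x hxI
      have hg_t : |g x - G * (x - b)^k / Nat.factorial k| ≤ Mg * (b-x)^(k+1) := hTayg x hxs
      have hh_t : |h x - h b - H2 * (x-b)^2/2| ≤ Mh * (b-x)^3 := hTayh x hxs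
      have hΘx : Θ (b - x) = Real.exp (t*h b - t*ω*(b-x)^2) * (G * (x - b)^k / Nat.factorial k) := by
        show Real.exp (t * h b - t * ω * (b-x)^2) * (G * (-(b-x))^k / (Nat.factorial k)) = _
        rw [show -(b-x) = x - b by ring]
      have hdec : φ x - Θ (b - x)
          = Real.exp (t * h x) * (g x - G * (x-b)^k/Nat.factorial k)
            + (G * (x-b)^k/Nat.factorial k)
              * (Real.exp (t*h x) - Real.exp (t*h b - t*ω*(b-x)^2)) := by
        rw [hΘx]
        show Real.exp (t * h x) * g x - _ = _
        ring
      rw [Real.norm_eq_abs, hdec]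
      have hexp_le : Real.exp (t * h x) ≤ Real.exp (t * (h b - ω/2*(b-x)^2)) :=
        Real.exp_le_exp.2 (mul_le_mul_of_nonneg_left hh_up ht0.le)
      have hmax_le : max (t * h x) (t*h b - t*ω*(b-x)^2) ≤ t * (h b - ω/2*(b-x)^2) := by
        apply max_le
        · exact mul_le_mul_of_nonneg_left hh_up ht0.le
        · rw [← sub_nonneg]
          rw [show t * (h b - ω/2*(b-x)^2) - (t*h b - t*ω*(b-x)^2) = t*(ω/2)*(b-x)^2 by ring]
          positivity
      have hargs : |t * h x - (t*h b - t*ω*(b-x)^2)| ≤ t * (Mh * (b-x)^3) := by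
        have e3 : t * h x - (t*h b - t*ω*(b-x)^2) = t * (h x - h b - H2 * (x-b)^2/2) := by
          rw [hωdef]; ring
        rw [e3, abs_mul, abs_of_nonneg ht0.le]
        exact mul_le_mul_of_nonneg_left hh_t ht0.le
      have hPb : |G * (x-b)^k/(Nat.factorial k : ℝ)| ≤ |G| * (b-x)^k / Nat.factorial k := by
        rw [abs_div, abs_mul, abs_pow]
        rw [show |x - b| = b - x by rw [abs_sub_comm]; exact abs_of_nonneg hu0]
        rw [Nat.abs_cast]
      have hed := abs_exp_sub_exp (t * h x) (t*h b - t*ω*(b-x)^2)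
      have hed2 : |Real.exp (t*h x) - Real.exp (t*h b - t*ω*(b-x)^2)|
          ≤ t * (Mh * (b-x)^3) * Real.exp (t * (h b - ω/2*(b-x)^2)) := by
        calc |Real.exp (t*h x) - Real.exp (t*h b - t*ω*(b-x)^2)|
            ≤ |t * h x - (t*h b - t*ω*(b-x)^2)| * Real.exp (max (t * h x) (t*h b - t*ω*(b-x)^2)) := hed
          _ ≤ t * (Mh * (b-x)^3) * Real.exp (t * (h b - ω/2*(b-x)^2)) := by
              apply mul_le_mul hargs (Real.exp_le_exp.2 hmax_le) (Real.exp_pos _).le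
              positivity
      have hterm1 : |Real.exp (t * h x) * (g x - G * (x-b)^k/Nat.factorial k)|
          ≤ Real.exp (t * (h b - ω/2*(b-x)^2)) * (Mg * (b-x)^(k+1)) := by
        rw [abs_mul, Real.abs_exp]
        exact mul_le_mul hexp_le hg_t (abs_nonneg _) (Real.exp_pos _).le
      have hterm2 : |(G * (x-b)^k/Nat.factorial k)
            * (Real.exp (t*h x) - Real.exp (t*h b - t*ω*(b-x)^2))|
          ≤ (|G| * (b-x)^k / Nat.factorial k)
            * (t * (Mh * (b-x)^3) * Real.exp (t * (h b - ω/2*(b-x)^2))) := by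
        rw [abs_mul]
        apply mul_le_mul hPb hed2 (abs_nonneg _)
        positivity
      have hEsplit : Real.exp (t*(h b - ω/2*(b-x)^2)) = E * Real.exp (-(t*(ω/2))*(b-x)^2) := by
        rw [hEdef, ← Real.exp_add]
        congr 1
        ring
      calc |Real.exp (t * h x) * (g x - G * (x-b)^k/Nat.factorial k)
            + (G * (x-b)^k/Nat.factorial k)
              * (Real.exp (t*h x) - Real.exp (t*h b - t*ω*(b-x)^2))|
          ≤ |Real.exp (t * h x) * (g x - G * (x-b)^k/Nat.factorial k)|
            + |(G * (x-b)^k/Nat.factorial k)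
              * (Real.exp (t*h x) - Real.exp (t*h b - t*ω*(b-x)^2))| := abs_add_le _ _
        _ ≤ Real.exp (t * (h b - ω/2*(b-x)^2)) * (Mg * (b-x)^(k+1))
            + (|G| * (b-x)^k / Nat.factorial k)
              * (t * (Mh * (b-x)^3) * Real.exp (t * (h b - ω/2*(b-x)^2))) :=
            add_le_add hterm1 hterm2
        _ = ρ (b - x) := by
            rw [hEsplit]
            show _ = E * Mg * ((b-x)^(k+1) * Real.exp (-(t*(ω/2)) * (b-x)^2))
              + E * (c3 * t) * ((b-x)^(k+3) * Real.exp (-(t*(ω/2)) * (b-x)^2))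
            rw [hc3def]
            field_simp
            ring
    have hρcont : Continuous ρ := by
      have c1 : Continuous fun u : ℝ => -(t*(ω/2)) * u^2 :=
        continuous_const.mul (continuous_pow 2)
      exact (continuous_const.mul ((continuous_pow _).mul (Real.continuous_exp.comp c1))).add
        (continuous_const.mul ((continuous_pow _).mul (Real.continuous_exp.comp c1)))
    have hρint : IntervalIntegrable (fun x => ρ (b - x)) MeasureTheory.volume (b-δ) b :=
      (hρcont.comp (continuous_const.sub continuous_id)).intervalIntegrable _ _
    have h3 := intervalIntegral.norm_integral_le_abs_of_norm_le
      ((MeasureTheory.ae_restrict_iff' measurableSet_uIoc).2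
        (Filter.Eventually.of_forall hptw)) hρint
    have hρIoi : MeasureTheory.IntegrableOn ρ (Set.Ioi 0) MeasureTheory.volume := by
      apply MeasureTheory.Integrable.add
      · exact (gauss_integrableOn (k+1) hc2).const_mul _
      · exact (gauss_integrableOn (k+3) hc2).const_mul _
    have h4 : ∫ x in (b-δ)..b, ρ (b - x) = ∫ u in (0:ℝ)..δ, ρ u := by
      rw [intervalIntegral.integral_comp_sub_left ρ b]
      norm_num
    have h5 : ∫ u in (0:ℝ)..δ, ρ u ≤ ∫ u in Set.Ioi (0:ℝ), ρ u := by
      rw [intervalIntegral.integral_of_le hδ0.le]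
      exact MeasureTheory.setIntegral_mono_set hρIoi
        (Filter.Eventually.of_forall (fun u => hρnn u))
        (Set.Ioc_subset_Ioi_self.eventuallyLE)
    have hval1 : ∫ u in Set.Ioi (0:ℝ), u^(k+1) * Real.exp (-(t*(ω/2)) * u^2)
        = (t*(ω/2)) ^ (-((k:ℝ)+2)/2) * (1/2) * Real.Gamma (((k:ℝ)+2)/2) := by
      rw [gauss_moment (k+1) hc2]
      rw [show -(((k+1:ℕ):ℝ)+1)/2 = -((k:ℝ)+2)/2 by push_cast; ring]
      rw [show (((k+1:ℕ):ℝ)+1)/2 = ((k:ℝ)+2)/2 by push_cast; ring]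
    have hval2 : ∫ u in Set.Ioi (0:ℝ), u^(k+3) * Real.exp (-(t*(ω/2)) * u^2)
        = (t*(ω/2)) ^ (-((k:ℝ)+4)/2) * (1/2) * Real.Gamma (((k:ℝ)+4)/2) := by
      rw [gauss_moment (k+3) hc2]
      rw [show -(((k+3:ℕ):ℝ)+1)/2 = -((k:ℝ)+4)/2 by push_cast; ring]
      rw [show (((k+3:ℕ):ℝ)+1)/2 = ((k:ℝ)+4)/2 by push_cast; ring]
    have h6 : ∫ u in Set.Ioi (0:ℝ), ρ u
        = E * Mg * ((t*(ω/2)) ^ (-((k:ℝ)+2)/2) * (1/2) * Real.Gamma (((k:ℝ)+2)/2))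
          + E * (c3 * t) * ((t*(ω/2)) ^ (-((k:ℝ)+4)/2) * (1/2) * Real.Gamma (((k:ℝ)+4)/2)) := by
      rw [show (∫ u in Set.Ioi (0:ℝ), ρ u)
          = (∫ u in Set.Ioi (0:ℝ), E * Mg * (u^(k+1) * Real.exp (-(t*(ω/2)) * u^2)))
            + ∫ u in Set.Ioi (0:ℝ), E * (c3 * t) * (u^(k+3) * Real.exp (-(t*(ω/2)) * u^2)) from
        MeasureTheory.integral_add ((gauss_integrableOn (k+1) hc2).const_mul _)
          ((gauss_integrableOn (k+3) hc2).const_mul _)]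
      rw [MeasureTheory.integral_const_mul, MeasureTheory.integral_const_mul, hval1, hval2]
    have hsplit1 : (t*(ω/2)) ^ (-((k:ℝ)+2)/2)
        = t ^ (-(1:ℝ) - (k:ℝ)/2) * (ω/2) ^ (-((k:ℝ)+2)/2) := by
      rw [Real.mul_rpow ht0.le (by positivity)]
      rw [show -((k:ℝ)+2)/2 = -(1:ℝ)-(k:ℝ)/2 by ring]
    have hsplit2 : t * (t*(ω/2)) ^ (-((k:ℝ)+4)/2)
        = t ^ (-(1:ℝ) - (k:ℝ)/2) * (ω/2) ^ (-((k:ℝ)+4)/2) := by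
      rw [Real.mul_rpow ht0.le (by positivity)]
      rw [show t * (t ^ (-((k:ℝ)+4)/2) * (ω/2) ^ (-((k:ℝ)+4)/2))
        = (t^(1:ℝ) * t ^ (-((k:ℝ)+4)/2)) * (ω/2) ^ (-((k:ℝ)+4)/2) by rw [Real.rpow_one]; ring]
      rw [← Real.rpow_add ht0]
      rw [show (1:ℝ) + -((k:ℝ)+4)/2 = -(1:ℝ)-(k:ℝ)/2 by ring]
    have h7 : ∫ u in Set.Ioi (0:ℝ), ρ u = (A1 + A2) * (E * t ^ (-(1:ℝ) - (k:ℝ)/2)) := by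
      rw [h6, hA1def, hA2def, hc3def]
      rw [hsplit1]
      rw [show E * (|G| * Mh / (Nat.factorial k) * t)
          * ((t*(ω/2)) ^ (-((k:ℝ)+4)/2) * (1/2) * Real.Gamma (((k:ℝ)+4)/2))
        = E * (|G| * Mh / (Nat.factorial k))
          * ((t * (t*(ω/2)) ^ (-((k:ℝ)+4)/2)) * (1/2) * Real.Gamma (((k:ℝ)+4)/2)) by ring]
      rw [hsplit2]
      ring
    have h8 : |∫ u in (0:ℝ)..δ, ρ u| = ∫ u in (0:ℝ)..δ, ρ u := by
      apply abs_of_nonneg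
      apply intervalIntegral.integral_nonneg hδ0.le
      exact fun u _ => hρnn u
    calc |∫ x in (b-δ)..b, (φ x - Θ (b - x))| ≤ |∫ x in (b-δ)..b, ρ (b - x)| := h3
      _ = |∫ u in (0:ℝ)..δ, ρ u| := by rw [h4]
      _ = ∫ u in (0:ℝ)..δ, ρ u := h8
      _ ≤ ∫ u in Set.Ioi (0:ℝ), ρ u := h5
      _ = (A1 + A2) * (E * t ^ (-(1:ℝ) - (k:ℝ)/2)) := h7
  -- Bound 3 : Gaussian tail
  have hB3 : |(E * (G/Nat.factorial k)) * ∫ u in Set.Ioi δ, Ψ u|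
      ≤ E * t ^ (-(1:ℝ) - (k:ℝ)/2) := by
    have hint : MeasureTheory.IntegrableOn (fun u : ℝ => u^k * Real.exp (-(t*(ω/2))*u^2))
        (Set.Ioi 0) MeasureTheory.volume := gauss_integrableOn k hc2
    have hintδ : MeasureTheory.IntegrableOn (fun u : ℝ => u^k * Real.exp (-(t*(ω/2))*u^2))
        (Set.Ioi δ) MeasureTheory.volume := hint.mono_set (Set.Ioi_subset_Ioi hδ0.le)
    have hΨintδ : MeasureTheory.IntegrableOn Ψ (Set.Ioi δ) MeasureTheory.volume :=
      hΨint.mono_set (Set.Ioi_subset_Ioi hδ0.le)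
    have hpt : ∀ u ∈ Set.Ioi δ, Ψ u
        ≤ Real.exp (-(ω*δ^2/2*t)) * (u^k * Real.exp (-(t*(ω/2))*u^2)) := by
      intro u hu
      have huδ : δ < u := hu
      have hu0 : 0 < u := lt_trans hδ0 huδ
      show u ^ k * Real.exp (-(t*ω) * u^2) ≤ _
      rw [show -(t*ω)*u^2 = (-(t*(ω/2))*u^2) + (-(t*(ω/2))*u^2) by ring, Real.exp_add]
      have h1 : Real.exp (-(t*(ω/2))*u^2) ≤ Real.exp (-(ω*δ^2/2*t)) := by
        exact Real.exp_le_exp.2 (laplace_arith5 ht0 hω hδ0 huδ)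
      have h2 : (0:ℝ) ≤ u^k * Real.exp (-(t*(ω/2))*u^2) := by positivity
      calc u ^ k * (Real.exp (-(t*(ω/2))*u^2) * Real.exp (-(t*(ω/2))*u^2))
          = (u^k * Real.exp (-(t*(ω/2))*u^2)) * Real.exp (-(t*(ω/2))*u^2) := by ring
        _ ≤ (u^k * Real.exp (-(t*(ω/2))*u^2)) * Real.exp (-(ω*δ^2/2*t)) :=
            mul_le_mul_of_nonneg_left h1 h2
        _ = Real.exp (-(ω*δ^2/2*t)) * (u^k * Real.exp (-(t*(ω/2))*u^2)) := by ring
    have h2 : ∫ u in Set.Ioi δ, Ψ u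
        ≤ Real.exp (-(ω*δ^2/2*t)) * ∫ u in Set.Ioi (0:ℝ), u^k * Real.exp (-(t*(ω/2))*u^2) := by
      calc ∫ u in Set.Ioi δ, Ψ u
          ≤ ∫ u in Set.Ioi δ, Real.exp (-(ω*δ^2/2*t)) * (u^k * Real.exp (-(t*(ω/2))*u^2)) :=
            MeasureTheory.setIntegral_mono_on hΨintδ (hintδ.const_mul _) measurableSet_Ioi hpt
        _ = Real.exp (-(ω*δ^2/2*t)) * ∫ u in Set.Ioi δ, u^k * Real.exp (-(t*(ω/2))*u^2) :=
            MeasureTheory.integral_const_mul _ _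
        _ ≤ Real.exp (-(ω*δ^2/2*t)) * ∫ u in Set.Ioi (0:ℝ), u^k * Real.exp (-(t*(ω/2))*u^2) := by
            apply mul_le_mul_of_nonneg_left _ (Real.exp_pos _).le
            apply MeasureTheory.setIntegral_mono_set hint
            · refine (MeasureTheory.ae_restrict_mem measurableSet_Ioi).mono (fun u hu => ?_)
              have hu0 : (0:ℝ) < u := hu
              show (0:ℝ) ≤ u^k * Real.exp (-(t*(ω/2))*u^2)
              positivity
            · exact (Set.Ioi_subset_Ioi hδ0.le).eventuallyLE
    have h2nn : 0 ≤ ∫ u in Set.Ioi δ, Ψ u :=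
      MeasureTheory.setIntegral_nonneg measurableSet_Ioi
        (fun u hu => hΨnn u (Set.Ioi_subset_Ioi hδ0.le hu))
    have hval : ∫ u in Set.Ioi (0:ℝ), u^k * Real.exp (-(t*(ω/2))*u^2)
        = (t*(ω/2)) ^ (-((k:ℝ)+1)/2) * (1/2) * Real.Gamma (((k:ℝ)+1)/2) := gauss_moment k hc2
    have hsplit : (t*(ω/2)) ^ (-((k:ℝ)+1)/2)
        = t ^ (-((k:ℝ)+1)/2) * (ω/2) ^ (-((k:ℝ)+1)/2) := Real.mul_rpow ht0.le (by positivity)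
    have habs1 : |(E * (G/Nat.factorial k)) * ∫ u in Set.Ioi δ, Ψ u|
        = E * (|G|/Nat.factorial k) * ∫ u in Set.Ioi δ, Ψ u := by
      rw [abs_mul, abs_of_nonneg h2nn, abs_mul, abs_of_pos hE0, abs_div, Nat.abs_cast]
    rw [habs1]
    calc E * (|G|/Nat.factorial k) * ∫ u in Set.Ioi δ, Ψ u
        ≤ E * (|G|/Nat.factorial k) * (Real.exp (-(ω*δ^2/2*t))
            * ((t*(ω/2)) ^ (-((k:ℝ)+1)/2) * (1/2) * Real.Gamma (((k:ℝ)+1)/2))) := by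
          apply mul_le_mul_of_nonneg_left _ (by positivity)
          rw [← hval]
          exact h2
      _ = (Atail * Real.exp (-(ω*δ^2/2 * t))) * (E * t ^ (-((k:ℝ)+1)/2)) := by
          rw [hsplit, hAtaildef]
          ring
      _ ≤ t ^ (-(1/2:ℝ)) * (E * t ^ (-((k:ℝ)+1)/2)) := by
          apply mul_le_mul_of_nonneg_right (hT₂ t htT₂)
          have : (0:ℝ) ≤ t ^ (-((k:ℝ)+1)/2) := (Real.rpow_pos_of_pos ht0 _).le
          positivity
      _ = E * t ^ (-(1:ℝ) - (k:ℝ)/2) := by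
          rw [show (-(1:ℝ) - (k:ℝ)/2) = (-(1/2:ℝ)) + (-((k:ℝ)+1)/2) by ring,
            Real.rpow_add ht0]
          ring
  -- final assembly
  have htri : |(∫ x in a..b, φ x) -
      E * (-(t ^ (-(1:ℝ)/2 - (k:ℝ)/2)) * G *
        Real.sqrt ((2:ℝ)^(k-1)/|H2|^(k+1)) *
        ((Nat.factorial ((k-1)/2) : ℝ)/(Nat.factorial k : ℝ)))|
      ≤ |∫ x in a..(b-δ), φ x| + |∫ x in (b-δ)..b, (φ x - Θ (b - x))|
        + |(E * (G/Nat.factorial k)) * ∫ u in Set.Ioi δ, Ψ u| := by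
    rw [hdecomp]
    exact (abs_add_le _ _).trans (add_le_add_left (abs_add_le _ _) _)
  calc |(∫ x in a..b, φ x) -
      E * (-(t ^ (-(1:ℝ)/2 - (k:ℝ)/2)) * G *
        Real.sqrt ((2:ℝ)^(k-1)/|H2|^(k+1)) *
        ((Nat.factorial ((k-1)/2) : ℝ)/(Nat.factorial k : ℝ)))|
      ≤ |∫ x in a..(b-δ), φ x| + |∫ x in (b-δ)..b, (φ x - Θ (b - x))|
        + |(E * (G/Nat.factorial k)) * ∫ u in Set.Ioi δ, Ψ u| := htri
    _ ≤ (E * t ^ (-(1:ℝ) - (k:ℝ)/2)) + ((A1 + A2) * (E * t ^ (-(1:ℝ) - (k:ℝ)/2)))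
        + (E * t ^ (-(1:ℝ) - (k:ℝ)/2)) := add_le_add (add_le_add hB1 hB2) hB3
    _ = (A1 + A2 + 2) * E * t ^ (-(1:ℝ) - (k:ℝ)/2) := by ring
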